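/- For any morphism of flows f : {0̂<1̂}ⁿ → Z from the flow of the poset {0̂<1̂}ⁿ to a flow Z, f is uniquely determined by its restriction to the images of the coface maps, i.e., by the family of morphisms f ∘ |δᵢᵅ| : {0̂<1̂}ⁿ⁻¹ → Z for 1 ≤ i ≤ n, α ∈ {0,1}, provided n ≥ 3. Consequently the inclusion ∂□[n] → □[n] induces an isomorphism of flows |∂□[n]|_bad ≅ |□[n]|_bad for n ≥ 3. -/

import Mathlib

/-- The predicate on set maps `{0,1}ᵖ → {0,1}^q` of being a morphism of the cube
category `□`, i.e. a (possibly empty) composite of coface maps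
`δᵢᵅ = Fin.insertNth i α`. -/
inductive IsCubeMap : ∀ {p q : ℕ}, ((Fin p → Bool) → (Fin q → Bool)) → Prop
  | id {n : ℕ} : IsCubeMap (id : (Fin n → Bool) → (Fin n → Bool))
  | comp_delta {p q : ℕ} (f : (Fin p → Bool) → (Fin q → Bool)) (i : Fin (q + 1)) (α : Bool)
      (hf : IsCubeMap f) : IsCubeMap (fun ε => Fin.insertNth i α (f ε))


theorem IsCubeMap.comp {p q r : ℕ} {g : (Fin q → Bool) → (Fin r → Bool)}
    {f : (Fin p → Bool) → (Fin q → Bool)} (hg : IsCubeMap g) (hf : IsCubeMap f) :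
    IsCubeMap (g ∘ f) := by
  induction hg with
  | id => exact hf
  | comp_delta g' i α hg' ih => exact IsCubeMap.comp_delta (g' ∘ f) i α ih

/-- A flow: a small topological category without identity maps.  `states` is
the set of states, `paths a b` the topological space of (non-constant)
execution paths from `a` to `b`, with a continuous and strictly associative
composition law. -/
structure GFlow where
  states : Type
  paths : states → states → Type
  top : ∀ a b, TopologicalSpace (paths a b)
  comp : ∀ {a b c}, paths a b → paths b c → paths a c
  comp_assoc : ∀ {a b c d} (x : paths a b) (y : paths b c) (z : paths c d),
    comp (comp x y) z = comp x (comp y z)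
  comp_cont : ∀ a b c, @Continuous (paths a b × paths b c) (paths a c)
    (@instTopologicalSpaceProd _ _ (top a b) (top b c)) (top a c)
    (fun xy => comp xy.1 xy.2)

/-- A morphism of flows: a set map on states together with continuous maps on
path spaces, compatible with the composition. -/
structure FlowHom (X Y : GFlow) where
  f0 : X.states → Y.states
  fP : ∀ {a b}, X.paths a b → Y.paths (f0 a) (f0 b)
  fP_cont : ∀ a b, @Continuous (X.paths a b) (Y.paths (f0 a) (f0 b))
    (X.top a b) (Y.top (f0 a) (f0 b)) (fun x => fP x)
  fP_comp : ∀ {a b c} (x : X.paths a b) (y : X.paths b c),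
    fP (X.comp x y) = Y.comp (fP x) (fP y)

/-- Composition of morphisms of flows (`f` first, then `g`). -/
def FlowHom.comp {X Y Z : GFlow} (f : FlowHom X Y) (g : FlowHom Y Z) : FlowHom X Z where
  f0 := fun a => g.f0 (f.f0 a)
  fP := fun x => g.fP (f.fP x)
  fP_cont := fun a b =>
    @Continuous.comp _ _ _ (X.top a b) (Y.top (f.f0 a) (f.f0 b))
      (Z.top (g.f0 (f.f0 a)) (g.f0 (f.f0 b))) _ _ (g.fP_cont _ _) (f.fP_cont a b)
  fP_comp := fun x y => by
    show g.fP (f.fP (X.comp x y)) = Z.comp (g.fP (f.fP x)) (g.fP (f.fP y))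
    rw [f.fP_comp, g.fP_comp]

/-- The flow associated with the poset `{0̂ < 1̂}ⁿ` (the product order on
`{0,1}ⁿ`): there is exactly one execution path from `a` to `b` whenever
`a < b`, and the path spaces are discrete. -/
def cubeFlow (n : ℕ) : GFlow where
  states := Fin n → Bool
  paths a b := PLift (a < b)
  top _ _ := ⊥
  comp x y := PLift.up (lt_trans x.down y.down)
  comp_assoc := by intros; rfl
  comp_cont := by
    intro a b c
    letI : TopologicalSpace (PLift (a < b)) := ⊥
    letI : TopologicalSpace (PLift (b < c)) := ⊥
    letI : TopologicalSpace (PLift (a < c)) := ⊥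
    haveI : DiscreteTopology (PLift (a < b)) := ⟨rfl⟩
    haveI : DiscreteTopology (PLift (b < c)) := ⟨rfl⟩
    exact continuous_of_discreteTopology

/-- Every morphism of the cube category is strictly monotone. -/
theorem IsCubeMap.strictMono {p q : ℕ} {f : (Fin p → Bool) → (Fin q → Bool)}
    (hf : IsCubeMap f) : StrictMono f := by
  induction hf with
  | id => exact strictMono_id
  | comp_delta g i α hg ih =>
      intro a b hab
      have h1 : Fin.insertNth (α := fun _ => Bool) i α (g a) ≤
          Fin.insertNth (α := fun _ => Bool) i α (g b) := by
        rw [Fin.insertNth_le_iff]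
        constructor
        · simp
        · intro j
          simpa using (ih hab).le j
      refine lt_of_le_of_ne h1 ?_
      intro heq
      have := congr_fun heq
      apply (ih hab).ne
      funext j
      simpa [Fin.insertNth_apply_succAbove] using this (i.succAbove j)

/-- The morphism of flows `{0̂<1̂}ᵖ → {0̂<1̂}^q` induced by a morphism of the
cube category. -/
def cubeFlowHom {p q : ℕ} (f : (Fin p → Bool) → (Fin q → Bool)) (hf : IsCubeMap f) :
    FlowHom (cubeFlow p) (cubeFlow q) where
  f0 := f
  fP := fun {a b} x => ⟨hf.strictMono x.down⟩
  fP_cont := fun a b => continuous_bot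
  fP_comp := fun x y => rfl

/-- The morphism of flows `|δᵢᵅ| : {0̂<1̂}ⁿ → {0̂<1̂}ⁿ⁺¹` induced by the coface
map `δᵢᵅ`. -/
def cofaceFlow {n : ℕ} (i : Fin (n + 1)) (α : Bool) :
    FlowHom (cubeFlow n) (cubeFlow (n + 1)) :=
  cubeFlowHom (fun ε => Fin.insertNth i α ε)
    (IsCubeMap.comp_delta id i α IsCubeMap.id)

section
variable {X Y : GFlow}

instance (p : Prop) : Subsingleton (PLift p) := ⟨fun ⟨a⟩ ⟨b⟩ => by congr⟩

theorem FlowHom.ext' {f g : FlowHom X Y} (h0 : f.f0 = g.f0)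
    (hP : ∀ (a b : X.states) (x : X.paths a b), HEq (f.fP x) (g.fP x)) : f = g := by
  obtain ⟨f0, fP, fc, fm⟩ := f
  obtain ⟨g0, gP, gc, gm⟩ := g
  simp only at h0 hP
  subst h0
  have : @fP = @gP := by
    funext a b x
    exact eq_of_heq (hP a b x)
  subst this
  rfl

theorem FlowHom.fP_heq {f g : FlowHom X Y} (h : f = g) {a b : X.states} (x : X.paths a b) :
    HEq (f.fP x) (g.fP x) := by subst h; rfl

end

section
variable {N : ℕ}

lemma lt_of_insertNth_lt (i : Fin (N+1)) (α : Bool) {u v : Fin N → Bool}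
    (h : Fin.insertNth (α := fun _ => Bool) i α u < Fin.insertNth (α := fun _ => Bool) i α v) :
    u < v := by
  constructor
  · intro j
    have := h.le (i.succAbove j)
    simpa [Fin.insertNth_apply_succAbove] using this
  · intro hle
    exact absurd (le_antisymm h.le (by
      rw [Fin.insertNth_le_iff]
      exact ⟨by simp, fun j => by simpa [Fin.insertNth_apply_succAbove] using hle j⟩)) h.ne

lemma removeNth_lt (i : Fin (N+1)) {a b : Fin (N+1) → Bool} (hab : a < b) (h : a i = b i) :
    Fin.removeNth i a < Fin.removeNth i b := by
  apply lt_of_insertNth_lt i (a i)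
  rw [Fin.insertNth_self_removeNth]
  conv_rhs => rw [h, Fin.insertNth_self_removeNth]
  exact hab

end
lemma insertNth_apply_val {N : ℕ} (i : Fin (N+1)) (x : Bool) (p : Fin N → Bool) (k : Fin (N+1)) :
    Fin.insertNth (α := fun _ => Bool) i x p k =
      if _h : (k:ℕ) = (i:ℕ) then x
      else if h2 : (k:ℕ) < (i:ℕ) then p ⟨k, by omega⟩ else p ⟨(k:ℕ) - 1, by omega⟩ := by
  rcases lt_trichotomy k i with h|h|h
  · rw [Fin.insertNth_apply_below h, dif_neg (by omega), dif_pos (by exact h)]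
    simp only [eq_rec_constant]
    congr 1
  · subst h; simp [Fin.insertNth_apply_same]
  · rw [Fin.insertNth_apply_above h, dif_neg (by omega), dif_neg (by omega)]
    simp only [eq_rec_constant]
    congr 1

lemma insertNth_comm {N : ℕ} (i j : Fin (N+2)) (h : (j:ℕ) < (i:ℕ)) (α β : Bool)
    (w : Fin N → Bool) :
    Fin.insertNth (α := fun _ => Bool) i α
        (Fin.insertNth (α := fun _ => Bool) ⟨j, by omega⟩ β w) =
    Fin.insertNth (α := fun _ => Bool) j β
        (Fin.insertNth (α := fun _ => Bool) ⟨(i:ℕ)-1, by omega⟩ α w) := by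
  funext k
  simp only [insertNth_apply_val]
  split_ifs <;> first | rfl | omega | (congr 1; exact Fin.ext (by simp; omega))

lemma succAbove_val {N : ℕ} (i : Fin (N+1)) (k : Fin N) :
    ((i.succAbove k : Fin (N+1)) : ℕ) = if (k:ℕ) < (i:ℕ) then (k:ℕ) else (k:ℕ)+1 := by
  rw [Fin.succAbove]
  split_ifs with h1 h2 h2 <;> simp_all [Fin.lt_def] <;> omega

section Part2
variable {n : ℕ} {Z : GFlow}
  (φ : ∀ (r : ℕ) (f : (Fin r → Bool) → (Fin (n + 3) → Bool)),
    IsCubeMap f → r < n + 3 → FlowHom (cubeFlow r) Z)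

/-- compatibility hypothesis abbreviation -/
def Compat : Prop :=
  ∀ (r s : ℕ) (f : (Fin r → Bool) → (Fin (n + 3) → Bool))
    (g : (Fin s → Bool) → (Fin r → Bool)) (hf : IsCubeMap f) (hg : IsCubeMap g)
    (hr : r < n + 3) (hs : s < n + 3),
    φ s (f ∘ g) (hf.comp hg) hs = (cubeFlowHom g hg).comp (φ r f hf hr)

lemma deltaIsCubeMap {N : ℕ} (i : Fin (N+1)) (α : Bool) :
    IsCubeMap (fun ε => Fin.insertNth (α := fun _ => Bool) i α ε) :=
  IsCubeMap.comp_delta id i α IsCubeMap.id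

/-- The face morphism `φ` applied to the coface `δᵢᵅ`. -/
def Phi (i : Fin (n + 3)) (α : Bool) : FlowHom (cubeFlow (n + 2)) Z :=
  φ (n + 2) (fun ε => Fin.insertNth i α ε) (deltaIsCubeMap i α) (by omega)

lemma phi_congr {r : ℕ} (F1 F2 : (Fin r → Bool) → (Fin (n + 3) → Bool)) (h : F1 = F2)
    (p1 : IsCubeMap F1) (p2 : IsCubeMap F2) (hr : r < n + 3) :
    φ r F1 p1 hr = φ r F2 p2 hr := by subst h; rfl

lemma faceE (hc : Compat φ) (i j : Fin (n + 3)) (h : (j:ℕ) < (i:ℕ)) (α β : Bool) :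
    (cubeFlowHom (fun w => Fin.insertNth (α := fun _ => Bool) (⟨j, by omega⟩ : Fin (n+2)) β w)
        (deltaIsCubeMap _ β)).comp (Phi φ i α) =
    (cubeFlowHom (fun w => Fin.insertNth (α := fun _ => Bool) (⟨(i:ℕ)-1, by omega⟩ : Fin (n+2)) α w)
        (deltaIsCubeMap _ α)).comp (Phi φ j β) := by
  unfold Phi
  rw [← hc (n+2) (n+1) _ _ (deltaIsCubeMap i α) (deltaIsCubeMap _ β) (by omega) (by omega),
      ← hc (n+2) (n+1) _ _ (deltaIsCubeMap j β) (deltaIsCubeMap _ α) (by omega) (by omega)]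
  apply phi_congr
  funext w
  exact insertNth_comm i j h α β w

end Part2
section Part2b
variable {n : ℕ} {Z : GFlow}
  (φ : ∀ (r : ℕ) (f : (Fin r → Bool) → (Fin (n + 3) → Bool)),
    IsCubeMap f → r < n + 3 → FlowHom (cubeFlow r) Z)

lemma factor1 (i j : Fin (n + 3)) (h : (j:ℕ) < (i:ℕ)) (β : Bool) (a : Fin (n+3) → Bool)
    (hja : a j = β) :
    Fin.removeNth i a = Fin.insertNth (α := fun _ => Bool) (⟨j, by omega⟩ : Fin (n+2)) β
      (Fin.removeNth (⟨j, by omega⟩ : Fin (n+2)) (Fin.removeNth i a)) := by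
  have hv : (Fin.removeNth i a) ⟨j, by omega⟩ = β := by
    show a (i.succAbove ⟨j, by omega⟩) = β
    rw [show i.succAbove ⟨j, by omega⟩ = j from Fin.ext (by rw [succAbove_val]; simp; omega)]
    exact hja
  conv_rhs => rw [← hv]
  exact (Fin.insertNth_self_removeNth _ _).symm

lemma factor2 (i j : Fin (n + 3)) (h : (j:ℕ) < (i:ℕ)) (α β : Bool) (a : Fin (n+3) → Bool)
    (hia : a i = α) (hja : a j = β) :
    Fin.removeNth j a = Fin.insertNth (α := fun _ => Bool) (⟨(i:ℕ)-1, by omega⟩ : Fin (n+2)) α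
      (Fin.removeNth (⟨j, by omega⟩ : Fin (n+2)) (Fin.removeNth i a)) := by
  have hE : Fin.insertNth (α := fun _ => Bool) j β
      (Fin.insertNth (α := fun _ => Bool) (⟨(i:ℕ)-1, by omega⟩ : Fin (n+2)) α
        (Fin.removeNth (⟨j, by omega⟩ : Fin (n+2)) (Fin.removeNth i a))) = a := by
    rw [← insertNth_comm i j h α β, ← factor1 i j h β a hja, ← hia]
    exact Fin.insertNth_self_removeNth _ _
  conv_lhs => rw [← hE]
  rw [Fin.removeNth_insertNth]

lemma overlap0_lt (hc : Compat φ) (i j : Fin (n + 3)) (h : (j:ℕ) < (i:ℕ)) (α β : Bool)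
    (a : Fin (n+3) → Bool) (hia : a i = α) (hja : a j = β) :
    (Phi φ i α).f0 (Fin.removeNth i a) = (Phi φ j β).f0 (Fin.removeNth j a) := by
  have h1 := factor1 i j h β a hja
  have h2 := factor2 i j h α β a hia hja
  calc (Phi φ i α).f0 (Fin.removeNth i a)
      = ((cubeFlowHom
          (fun w => Fin.insertNth (α := fun _ => Bool) (⟨j, by omega⟩ : Fin (n+2)) β w)
          (deltaIsCubeMap _ β)).comp (Phi φ i α)).f0
          (Fin.removeNth (⟨j, by omega⟩ : Fin (n+2)) (Fin.removeNth i a)) := by (conv_lhs => rw [h1]); rfl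
    _ = ((cubeFlowHom
          (fun w => Fin.insertNth (α := fun _ => Bool) (⟨(i:ℕ)-1, by omega⟩ : Fin (n+2)) α w)
          (deltaIsCubeMap _ α)).comp (Phi φ j β)).f0
          (Fin.removeNth (⟨j, by omega⟩ : Fin (n+2)) (Fin.removeNth i a)) := by
            rw [faceE φ hc i j h α β]
    _ = (Phi φ j β).f0 (Fin.removeNth j a) := by (conv_rhs => rw [h2]); rfl

lemma overlap1_lt (hc : Compat φ) (i j : Fin (n + 3)) (h : (j:ℕ) < (i:ℕ)) (α β : Bool)
    (a b : Fin (n+3) → Bool) (hia : a i = α) (hja : a j = β) (hib : b i = α) (hjb : b j = β)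
    (x : PLift (Fin.removeNth i a < Fin.removeNth i b))
    (y : PLift (Fin.removeNth j a < Fin.removeNth j b)) :
    HEq ((Phi φ i α).fP x) ((Phi φ j β).fP y) := by
  have h1a := factor1 i j h β a hja
  have h1b := factor1 i j h β b hjb
  have h2a := factor2 i j h α β a hia hja
  have h2b := factor2 i j h α β b hib hjb
  revert x y
  rw [h1a, h1b, h2a, h2b]
  intro x y
  obtain ⟨x'⟩ := x
  obtain ⟨y'⟩ := y
  have hw := lt_of_insertNth_lt _ _ x'
  exact FlowHom.fP_heq (faceE φ hc i j h α β) (PLift.up hw)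

lemma overlap0 (hc : Compat φ) (i j : Fin (n + 3)) (α β : Bool)
    (a : Fin (n+3) → Bool) (hia : a i = α) (hja : a j = β) :
    (Phi φ i α).f0 (Fin.removeNth i a) = (Phi φ j β).f0 (Fin.removeNth j a) := by
  rcases lt_trichotomy (i:ℕ) (j:ℕ) with h|h|h
  · exact (overlap0_lt φ hc j i h β α a hja hia).symm
  · obtain rfl : i = j := Fin.ext h
    obtain rfl : α = β := hia.symm.trans hja
    rfl
  · exact overlap0_lt φ hc i j h α β a hia hja

lemma overlap1 (hc : Compat φ) (i j : Fin (n + 3)) (α β : Bool)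
    (a b : Fin (n+3) → Bool) (hia : a i = α) (hja : a j = β) (hib : b i = α) (hjb : b j = β)
    (x : PLift (Fin.removeNth i a < Fin.removeNth i b))
    (y : PLift (Fin.removeNth j a < Fin.removeNth j b)) :
    HEq ((Phi φ i α).fP x) ((Phi φ j β).fP y) := by
  rcases lt_trichotomy (i:ℕ) (j:ℕ) with h|h|h
  · exact (overlap1_lt φ hc j i h β α a b hja hia hjb hib y x).symm
  · obtain rfl : i = j := Fin.ext h
    obtain rfl : α = β := hia.symm.trans hja
    rw [Subsingleton.elim x y]
  · exact overlap1_lt φ hc i j h α β a b hia hja hib hjb x y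

end Part2b
theorem part1 (n : ℕ) (Z : GFlow) (f g : FlowHom (cubeFlow (n + 3)) Z)
    (hface : ∀ (i : Fin (n + 3)) (α : Bool),
      (cofaceFlow i α).comp f = (cofaceFlow i α).comp g) : f = g := by
  have h0 : f.f0 = g.f0 := by
    funext ε
    have h := congrFun (congrArg FlowHom.f0 (hface 0 (ε 0))) (Fin.removeNth 0 ε)
    have h2 : f.f0 (Fin.insertNth (α := fun _ => Bool) 0 (ε 0) (Fin.removeNth 0 ε)) =
        g.f0 (Fin.insertNth (α := fun _ => Bool) 0 (ε 0) (Fin.removeNth 0 ε)) := h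
    rwa [Fin.insertNth_self_removeNth (α := fun _ => Bool) 0 ε] at h2
  obtain ⟨f0, fP, fc, fm⟩ := f
  obtain ⟨g0, gP, gc, gm⟩ := g
  simp only at h0
  subst h0
  have hcomp : ∀ (i : Fin (n + 3)) (α : Bool) (a' b' : Fin (n + 2) → Bool)
      (x' : (cubeFlow (n + 2)).paths a' b'),
      fP ((cofaceFlow i α).fP x') = gP ((cofaceFlow i α).fP x') :=
    fun i α a' b' x' => eq_of_heq (FlowHom.fP_heq (hface i α) x')
  have key : ∀ (a b : Fin (n + 3) → Bool) (hab : a < b) (i : Fin (n + 3)),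
      a i = b i → fP (PLift.up hab) = gP (PLift.up hab) := by
    intro a b hab i hi
    obtain ⟨α, a', b', ha, hb⟩ : ∃ α a' b',
        a = Fin.insertNth (α := fun _ => Bool) i α a' ∧
        b = Fin.insertNth (α := fun _ => Bool) i α b' :=
      ⟨b i, Fin.removeNth i a, Fin.removeNth i b,
        by rw [← hi]; exact (Fin.insertNth_self_removeNth i a).symm,
        (Fin.insertNth_self_removeNth i b).symm⟩
    subst ha; subst hb
    exact hcomp i α a' b' (PLift.up (lt_of_insertNth_lt i α hab))
  suffices hPP : @fP = @gP by subst hPP; rfl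
  suffices hmain : ∀ (a b : Fin (n + 3) → Bool) (x : PLift (a < b)), fP x = gP x by
    funext a b x; exact hmain a b x
  intro a b x
  obtain ⟨hab⟩ := x
  by_cases hex : ∃ i, a i = b i
  · obtain ⟨i, hi⟩ := hex
    exact key a b hab i hi
  · push_neg at hex
    have hb2 : ∀ i, a i = false ∧ b i = true := by
      intro i
      have h1 : a i ≤ b i := hab.le i
      have h2 := hex i
      revert h1 h2
      cases a i <;> cases b i <;> decide
    have h1ne : (1 : Fin (n + 3)) ≠ 0 := by
      simp [Fin.ext_iff]
    set m : Fin (n + 3) → Bool := fun j => decide (j = 0) with hm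
    have hm1 : a < m := by
      refine lt_of_le_of_ne (fun j => by simp [(hb2 j).1, hm]) ?_
      intro hEq
      have := congrFun hEq 0
      simp [hm, (hb2 0).1] at this
    have hm2 : m < b := by
      refine lt_of_le_of_ne (fun j => by simp [(hb2 j).2, hm]) ?_
      intro hEq
      have := congrFun hEq 1
      simp [hm, (hb2 1).2, h1ne] at this
    calc fP (PLift.up hab) = fP ((cubeFlow (n+3)).comp (PLift.up hm1) (PLift.up hm2)) := rfl
      _ = Z.comp (fP (PLift.up hm1)) (fP (PLift.up hm2)) := fm _ _
      _ = Z.comp (gP (PLift.up hm1)) (gP (PLift.up hm2)) := by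
          rw [key a m hm1 1 (by simp [hm, h1ne, (hb2 1).1]),
            key m b hm2 0 (by simp [hm, (hb2 0).2])]
      _ = gP ((cubeFlow (n+3)).comp (PLift.up hm1) (PLift.up hm2)) := (gm _ _).symm
      _ = gP (PLift.up hab) := rfl
section Part2c
variable {n : ℕ} {Z : GFlow}
  (φ : ∀ (r : ℕ) (f : (Fin r → Bool) → (Fin (n + 3) → Bool)),
    IsCubeMap f → r < n + 3 → FlowHom (cubeFlow r) Z)

/-- The state map of the extension: use the face `i = 0`. -/
def H0 (ε : Fin (n+3) → Bool) : Z.states := (Phi φ 0 (ε 0)).f0 (Fin.removeNth 0 ε)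

lemma H0_face (hc : Compat φ) (i : Fin (n+3)) (α : Bool) (a : Fin (n+3) → Bool)
    (hia : a i = α) : H0 φ a = (Phi φ i α).f0 (Fin.removeNth i a) :=
  overlap0 φ hc 0 i (a 0) α a rfl hia

def cast2 {W : GFlow} {u v u' v' : W.states} (h1 : u = u') (h2 : v = v')
    (p : W.paths u v) : W.paths u' v' := h1 ▸ h2 ▸ p

lemma cast2_heq {W : GFlow} {u v u' v' : W.states} (h1 : u = u') (h2 : v = v')
    (p : W.paths u v) : HEq (cast2 h1 h2 p) p := by subst h1; subst h2; rfl

lemma cast2_eq_of_heq {W : GFlow} {u v u' v' w x : W.states} (h1 : u = w) (h2 : v = x)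
    (h1' : u' = w) (h2' : v' = x) {p : W.paths u v} {p' : W.paths u' v'}
    (hp : HEq p p') : cast2 h1 h2 p = cast2 h1' h2' p' := by
  subst h1; subst h2; subst h1'; subst h2'
  exact congrArg _ (eq_of_heq hp)

lemma cast2_comp {W : GFlow} {u v w u' v' w' : W.states} (h1 : u = u') (h2 : v = v')
    (h3 : w = w') (p : W.paths u v) (q : W.paths v w) :
    cast2 h1 h3 (W.comp p q) = W.comp (cast2 h1 h2 p) (cast2 h2 h3 q) := by
  subst h1; subst h2; subst h3; rfl

/-- The path map within the face `(i, α)`. -/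
def Q (hc : Compat φ) (i : Fin (n+3)) (α : Bool) {a b : Fin (n+3) → Bool} (hab : a < b)
    (hia : a i = α) (hib : b i = α) : Z.paths (H0 φ a) (H0 φ b) :=
  cast2 (H0_face φ hc i α a hia).symm (H0_face φ hc i α b hib).symm
    ((Phi φ i α).fP (PLift.up (removeNth_lt i hab (hia.trans hib.symm))))

lemma QIndep (hc : Compat φ) (i j : Fin (n+3)) (α β : Bool) {a b : Fin (n+3) → Bool}
    (hab : a < b) (hia : a i = α) (hib : b i = α) (hja : a j = β) (hjb : b j = β) :
    Q φ hc i α hab hia hib = Q φ hc j β hab hja hjb :=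
  cast2_eq_of_heq _ _ _ _ (overlap1 φ hc i j α β a b hia hja hib hjb _ _)

lemma QComp (hc : Compat φ) (i : Fin (n+3)) (α : Bool) {a b c : Fin (n+3) → Bool}
    (hab : a < b) (hbc : b < c) (hia : a i = α) (hib : b i = α) (hic : c i = α) :
    Q φ hc i α (lt_trans hab hbc) hia hic =
      Z.comp (Q φ hc i α hab hia hib) (Q φ hc i α hbc hib hic) := by
  unfold Q
  rw [← cast2_comp (h2 := (H0_face φ hc i α b hib).symm)]
  exact congrArg (cast2 _ _) ((Phi φ i α).fP_comp (PLift.up _) (PLift.up _))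

def midF : Fin (n+3) → Bool := fun j => decide (j = 0)

lemma midF_zero : (midF (n := n)) 0 = true := by simp [midF]

lemma midF_one : (midF (n := n)) 1 = false := by
  simp [midF, Fin.ext_iff]

lemma bot_top {a b : Fin (n+3) → Bool} (hab : a < b) (h : ¬∃ i, a i = b i) :
    ∀ i, a i = false ∧ b i = true := by
  intro i
  have h1 : a i ≤ b i := hab.le i
  have h2 : a i ≠ b i := fun hh => h ⟨i, hh⟩
  revert h1 h2
  cases a i <;> cases b i <;> decide

lemma lt_midF {a b : Fin (n+3) → Bool} (hab : a < b) (h : ¬∃ i, a i = b i) :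
    a < midF := by
  refine lt_of_le_of_ne (fun j => by simp [(bot_top hab h j).1]) ?_
  intro hEq
  have := congrFun hEq 0
  simp [(bot_top hab h 0).1, midF] at this

lemma midF_lt {a b : Fin (n+3) → Bool} (hab : a < b) (h : ¬∃ i, a i = b i) :
    midF < b := by
  refine lt_of_le_of_ne (fun j => by simp [(bot_top hab h j).2]) ?_
  intro hEq
  have := congrFun hEq 1
  rw [midF_one, (bot_top hab h 1).2] at this
  exact Bool.false_ne_true this

/-- The path map of the extension. -/
noncomputable def HP (hc : Compat φ) {a b : Fin (n+3) → Bool} (hab : a < b) :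
    Z.paths (H0 φ a) (H0 φ b) :=
  if h : ∃ i, a i = b i then Q φ hc h.choose (b h.choose) hab h.choose_spec rfl
  else Z.comp (Q φ hc 1 false (lt_midF hab h) (bot_top hab h 1).1 midF_one)
              (Q φ hc 0 true (midF_lt hab h) midF_zero (bot_top hab h 0).2)

lemma HP_eq_Q (hc : Compat φ) {a b : Fin (n+3) → Bool} (hab : a < b) (i : Fin (n+3))
    (hi : a i = b i) : HP φ hc hab = Q φ hc i (b i) hab hi rfl := by
  unfold HP
  rw [dif_pos ⟨i, hi⟩]
  exact QIndep φ hc _ i _ (b i) hab (Exists.choose_spec (⟨i, hi⟩ : ∃ i, a i = b i)) rfl hi rfl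

lemma squeezeB {x y z : Bool} (h1 : x ≤ y) (h2 : y ≤ z) (h : x = z) : y = z := by
  revert h1 h2 h; cases x <;> cases y <;> cases z <;> decide

lemma CaseA (hc : Compat φ) {a b c : Fin (n+3) → Bool} (hab : a < b) (hbc : b < c)
    (i : Fin (n+3)) (hi : a i = c i) :
    HP φ hc (lt_trans hab hbc) = Z.comp (HP φ hc hab) (HP φ hc hbc) := by
  have hbi : b i = c i := squeezeB (hab.le i) (hbc.le i) hi
  rw [HP_eq_Q φ hc (lt_trans hab hbc) i hi,
      HP_eq_Q φ hc hab i (hi.trans hbi.symm),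
      HP_eq_Q φ hc hbc i hbi,
      QIndep φ hc i i (b i) (c i) hab (hi.trans hbi.symm) rfl hi hbi]
  exact QComp φ hc i (c i) hab hbc hi hbi rfl

def botF : Fin (n+3) → Bool := fun _ => false
def topF : Fin (n+3) → Bool := fun _ => true

lemma Rstep (hc : Compat φ) (b b' : Fin (n+3) → Bool) (h1 : botF < b) (h2 : b < b')
    (h3 : b' < topF) :
    Z.comp (HP φ hc h1) (HP φ hc (lt_trans h2 h3)) =
      Z.comp (HP φ hc (lt_trans h1 h2)) (HP φ hc h3) := by
  obtain ⟨j, hj⟩ : ∃ j, b j = topF j := by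
    obtain ⟨-, j, hj⟩ := Pi.lt_def.mp h1
    exact ⟨j, by revert hj; show botF j < b j → _; cases hb : b j <;> simp [botF, topF]⟩
  obtain ⟨i, hi⟩ : ∃ i, botF i = b' i := by
    obtain ⟨-, i, hi⟩ := Pi.lt_def.mp h3
    exact ⟨i, by revert hi; show b' i < topF i → _; cases hb : b' i <;> simp [botF, topF]⟩
  calc Z.comp (HP φ hc h1) (HP φ hc (lt_trans h2 h3))
      = Z.comp (HP φ hc h1) (Z.comp (HP φ hc h2) (HP φ hc h3)) := by
        rw [CaseA φ hc h2 h3 j hj]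
    _ = Z.comp (Z.comp (HP φ hc h1) (HP φ hc h2)) (HP φ hc h3) := (Z.comp_assoc _ _ _).symm
    _ = Z.comp (HP φ hc (lt_trans h1 h2)) (HP φ hc h3) := by
        rw [CaseA φ hc h1 h2 i hi]

lemma Rle (hc : Compat φ) (b b' : Fin (n+3) → Bool) (hbb : b ≤ b') (h1 : botF < b)
    (h2 : b < topF) (h1' : botF < b') (h2' : b' < topF) :
    Z.comp (HP φ hc h1) (HP φ hc h2) = Z.comp (HP φ hc h1') (HP φ hc h2') := by
  rcases eq_or_lt_of_le hbb with h|h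
  · subst h; rfl
  · exact Rstep φ hc b b' h1 h h2'

def singF (k : Fin (n+3)) : Fin (n+3) → Bool := fun j => decide (j = k)
def douF (k l : Fin (n+3)) : Fin (n+3) → Bool := fun j => decide (j = k) || decide (j = l)

lemma bot_lt_singF (k : Fin (n+3)) : botF < singF k := by
  refine lt_of_le_of_ne (fun j => by simp [botF]) ?_
  intro hEq
  have := congrFun hEq k
  simp [botF, singF] at this

lemma singF_lt_topF (k : Fin (n+3)) : singF k < topF := by
  refine lt_of_le_of_ne (fun j => by simp [topF]) ?_
  obtain ⟨j, hjk⟩ := exists_ne k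
  intro hEq
  have := congrFun hEq j
  simp [singF, topF, hjk] at this

lemma singF_le_douF_left (k l : Fin (n+3)) : singF k ≤ douF k l := by
  intro j
  by_cases hj : j = k <;> simp [singF, douF, hj]

lemma singF_le_douF_right (k l : Fin (n+3)) : singF l ≤ douF k l := by
  intro j
  by_cases hj : j = l <;> simp [singF, douF, hj]

lemma bot_lt_douF (k l : Fin (n+3)) : botF < douF k l :=
  lt_of_lt_of_le (bot_lt_singF k) (singF_le_douF_left k l)

lemma douF_lt_topF (k l : Fin (n+3)) : douF k l < topF := by
  obtain ⟨m, hmk, hml⟩ : ∃ m : Fin (n+3), m ≠ k ∧ m ≠ l := by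
    by_contra hcon
    push_neg at hcon
    have hsub : (Finset.univ : Finset (Fin (n+3))) ⊆ {k, l} := by
      intro m _
      rcases eq_or_ne m k with rfl|hm
      · simp
      · simp [hcon m hm]
    have hcard := Finset.card_le_card hsub
    have h2 : ({k, l} : Finset (Fin (n+3))).card ≤ 2 := by
      refine le_trans (Finset.card_insert_le _ _) ?_
      simp
    simp [Finset.card_univ] at hcard
    omega
  refine lt_of_le_of_ne (fun j => by simp [topF]) ?_
  intro hEq
  have := congrFun hEq m
  simp [douF, topF, hmk, hml] at this

lemma singF_le_of_true {k : Fin (n+3)} {b : Fin (n+3) → Bool} (hk : b k = true) :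
    singF k ≤ b := by
  intro j
  by_cases hj : j = k
  · subst hj; simp [singF, hk]
  · simp [singF, hj]

lemma Rconst (hc : Compat φ) (b b' : Fin (n+3) → Bool) (h1 : botF < b) (h2 : b < topF)
    (h1' : botF < b') (h2' : b' < topF) :
    Z.comp (HP φ hc h1) (HP φ hc h2) = Z.comp (HP φ hc h1') (HP φ hc h2') := by
  obtain ⟨k, hk⟩ : ∃ k, b k = true := by
    obtain ⟨-, k, hk⟩ := Pi.lt_def.mp h1
    exact ⟨k, by revert hk; show botF k < b k → _; cases hb : b k <;> simp [botF]⟩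
  obtain ⟨l, hl⟩ : ∃ l, b' l = true := by
    obtain ⟨-, l, hl⟩ := Pi.lt_def.mp h1'
    exact ⟨l, by revert hl; show botF l < b' l → _; cases hb : b' l <;> simp [botF]⟩
  have R1 := Rle φ hc (singF k) b (singF_le_of_true hk) (bot_lt_singF k) (singF_lt_topF k) h1 h2
  have R2 := Rle φ hc (singF l) b' (singF_le_of_true hl) (bot_lt_singF l) (singF_lt_topF l) h1' h2'
  have R3 := Rle φ hc (singF k) (douF k l) (singF_le_douF_left k l) (bot_lt_singF k)
    (singF_lt_topF k) (bot_lt_douF k l) (douF_lt_topF k l)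
  have R4 := Rle φ hc (singF l) (douF k l) (singF_le_douF_right k l) (bot_lt_singF l)
    (singF_lt_topF l) (bot_lt_douF k l) (douF_lt_topF k l)
  exact R1.symm.trans ((R3.trans R4.symm).trans R2)

lemma main_comp (hc : Compat φ) {a b c : Fin (n+3) → Bool} (x : PLift (a < b))
    (y : PLift (b < c)) :
    HP φ hc (lt_trans x.down y.down) = Z.comp (HP φ hc x.down) (HP φ hc y.down) := by
  obtain ⟨hab⟩ := x
  obtain ⟨hbc⟩ := y
  show HP φ hc (lt_trans hab hbc) = Z.comp (HP φ hc hab) (HP φ hc hbc)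
  by_cases hex : ∃ i, a i = c i
  · obtain ⟨i, hi⟩ := hex
    exact CaseA φ hc hab hbc i hi
  · have bt := bot_top (lt_trans hab hbc) hex
    obtain rfl : a = botF := funext fun i => (bt i).1
    obtain rfl : c = topF := funext fun i => (bt i).2
    have hmid1 : botF < (midF (n := n)) := lt_midF (lt_trans hab hbc) hex
    have hmid2 : (midF (n := n)) < topF := midF_lt (lt_trans hab hbc) hex
    have hLHS : HP φ hc (lt_trans hab hbc) =
        Z.comp (Q φ hc 1 false hmid1 rfl midF_one) (Q φ hc 0 true hmid2 midF_zero rfl) := by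
      unfold HP
      rw [dif_neg hex]
    have e1 : Q φ hc 1 false hmid1 rfl midF_one = HP φ hc hmid1 := by
      rw [HP_eq_Q φ hc hmid1 1 (show botF 1 = midF 1 from midF_one.symm)]
      exact QIndep φ hc 1 1 false (midF 1) hmid1 rfl midF_one midF_one.symm rfl
    have e2 : Q φ hc 0 true hmid2 midF_zero rfl = HP φ hc hmid2 := by
      rw [HP_eq_Q φ hc hmid2 0 (show midF 0 = topF 0 from midF_zero)]
      exact QIndep φ hc 0 0 true (topF 0) hmid2 midF_zero rfl midF_zero rfl
    rw [hLHS, e1, e2]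
    exact Rconst φ hc midF b hmid1 hmid2 hab hbc

/-- The extension morphism `|□[n]| → Z`. -/
noncomputable def Hhom (hc : Compat φ) : FlowHom (cubeFlow (n+3)) Z where
  f0 := H0 φ
  fP := fun x => HP φ hc x.down
  fP_cont := fun a b => by
    exact @continuous_of_discreteTopology _ ((cubeFlow (n+3)).top a b) (@DiscreteTopology.mk _ ((cubeFlow (n+3)).top a b) rfl) _ (Z.top _ _) _
  fP_comp := fun x y => main_comp φ hc x y

lemma HP_heq (hc : Compat φ) (i : Fin (n+3)) (α : Bool) {a b : Fin (n+3) → Bool}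
    (hab : a < b) (hia : a i = α) (hib : b i = α) {u v : Fin (n+2) → Bool}
    (hu : Fin.removeNth i a = u) (hv : Fin.removeNth i b = v) (y : PLift (u < v)) :
    HEq (HP φ hc hab) ((Phi φ i α).fP y) := by
  subst hu; subst hv
  rw [HP_eq_Q φ hc hab i (hia.trans hib.symm),
    QIndep φ hc i i (b i) α hab (hia.trans hib.symm) rfl hia hib]
  unfold Q
  rw [Subsingleton.elim y (PLift.up (removeNth_lt i hab (hia.trans hib.symm)))]
  exact cast2_heq _ _ _

lemma cocone (hc : Compat φ) (r : ℕ) (f : (Fin r → Bool) → (Fin (n+3) → Bool))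
    (hf : IsCubeMap f) (hr : r < n + 3) :
    φ r f hf hr = (cubeFlowHom f hf).comp (Hhom φ hc) := by
  cases hf with
  | id => omega
  | comp_delta f' i α hf' =>
    have e0 : φ r (fun ε => Fin.insertNth i α (f' ε)) (IsCubeMap.comp_delta f' i α hf') hr =
        (cubeFlowHom f' hf').comp (Phi φ i α) :=
      hc (n+2) r (fun ε => Fin.insertNth i α ε) f' (deltaIsCubeMap i α) hf' (by omega) hr
    rw [e0]
    apply FlowHom.ext'
    · funext η
      show (Phi φ i α).f0 (f' η) = H0 φ (Fin.insertNth i α (f' η))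
      rw [H0_face φ hc i α _ (Fin.insertNth_apply_same (α := fun _ => Bool) i α (f' η)), Fin.removeNth_insertNth]
    · intro η η' x
      have hx : f' η < f' η' := hf'.strictMono x.down
      have hab2 : Fin.insertNth (α := fun _ => Bool) i α (f' η) <
          Fin.insertNth (α := fun _ => Bool) i α (f' η') := (deltaIsCubeMap i α).strictMono hx
      have hh := HP_heq φ hc i α hab2 (Fin.insertNth_apply_same (α := fun _ => Bool) i α (f' η))
        (Fin.insertNth_apply_same (α := fun _ => Bool) i α (f' η'))
        (Fin.removeNth_insertNth (α := fun _ => Bool) i α (f' η))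
        (Fin.removeNth_insertNth (α := fun _ => Bool) i α (f' η'))
        (PLift.up hx)
      show HEq ((Phi φ i α).fP (PLift.up (hf'.strictMono x.down)))
        (HP φ hc ((IsCubeMap.comp_delta f' i α hf').strictMono x.down))
      exact hh.symm

end Part2c
/-- For `n ≥ 3` (written `n + 3`):
(1) any morphism of flows `f : {0̂<1̂}ⁿ → Z` is uniquely determined by its
restrictions `f ∘ |δᵢᵅ|` to the faces of the cube; and
(2) consequently the inclusion `∂□[n] → □[n]` induces an isomorphism of flows
`|∂□[n]|_bad ≅ |□[n]|_bad`, expressed here by the universal property: the flow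
`{0̂<1̂}ⁿ = |□[n]|_bad`, with the cocone given by the morphisms
`|f| : {0̂<1̂}^r → {0̂<1̂}ⁿ` induced by the proper cube-category morphisms
`f : [r] → [n]` (`r < n`), is a colimit of the diagram of cubes of
`∂□[n]`. -/
theorem cube_bad_realization_boundary (n : ℕ) :
    (∀ (Z : GFlow) (f g : FlowHom (cubeFlow (n + 3)) Z),
      (∀ (i : Fin (n + 3)) (α : Bool),
        (cofaceFlow i α).comp f = (cofaceFlow i α).comp g) → f = g) ∧
    (∀ (Z : GFlow)
      (φ : ∀ (r : ℕ) (f : (Fin r → Bool) → (Fin (n + 3) → Bool)),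
        IsCubeMap f → r < n + 3 → FlowHom (cubeFlow r) Z),
      (∀ (r s : ℕ) (f : (Fin r → Bool) → (Fin (n + 3) → Bool))
        (g : (Fin s → Bool) → (Fin r → Bool)) (hf : IsCubeMap f) (hg : IsCubeMap g)
        (hr : r < n + 3) (hs : s < n + 3),
        φ s (f ∘ g) (hf.comp hg) hs = (cubeFlowHom g hg).comp (φ r f hf hr)) →
      ∃! h : FlowHom (cubeFlow (n + 3)) Z,
        ∀ (r : ℕ) (f : (Fin r → Bool) → (Fin (n + 3) → Bool))
          (hf : IsCubeMap f) (hr : r < n + 3),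
          φ r f hf hr = (cubeFlowHom f hf).comp h) := by
  constructor
  · exact part1 n
  · intro Z φ hc
    refine ⟨Hhom φ hc, fun r f hf hr => cocone φ hc r f hf hr, ?_⟩
    intro h' hh'
    apply part1 n Z h' (Hhom φ hc)
    intro i α
    have h1 := hh' (n+2) (fun ε => Fin.insertNth i α ε) (deltaIsCubeMap i α) (by omega)
    have h2 := cocone φ hc (n+2) (fun ε => Fin.insertNth i α ε) (deltaIsCubeMap i α) (by omega)
    exact h1.symm.trans h2
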